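/- (Lemma 1 of the paper.) Let p ∈ ℝⁿ be a probability vector coherent with the dual residue κ (i.e. p_i > 0 whenever κ_i ≠ 0), and let 0 ≤ θ ≤ min_{i ∈ I} p_i where I = {i : κ_i ≠ 0}. For each i let Δ_i ∈ ℝ maximize Δ ↦ −φ_i*(−(α_i + Δ)) − (A_iᵀw)·Δ − (v_i/(2λn))·Δ². Then the expected dual ascent satisfies ∑_{i=1}^n p_i·(D(α + Δ_i e_i) − D(α)) − θ·(P(w) − D(α)) ≥ −(θ/(2λn²))·∑_{i ∈ I} ( θ(v_i + nλγ)/p_i − nλγ )·κ_i². -/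

import Mathlib

open scoped BigOperators InnerProductSpace

/-- Smoothness/descent lemma: Lipschitz derivative gives quadratic upper bound. -/
lemma aux_smooth {f f' : ℝ → ℝ} {L : ℝ}
    (hd : ∀ x, HasDerivAt f (f' x) x)
    (hlip : ∀ a b, |f' a - f' b| ≤ L * |a - b|) (x y : ℝ) :
    f y ≤ f x + f' x * (y - x) + L / 2 * (y - x) ^ 2 := by
  set h : ℝ → ℝ := fun t => f t - f' x * t - L / 2 * (t - x) ^ 2 with hh
  have hd' : ∀ t, HasDerivAt h (f' t - f' x - L * (t - x)) t := by
    intro t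
    have h1 : HasDerivAt (fun t : ℝ => (t - x) ^ 2) (2 * (t - x)) t := by
      have h0 := ((hasDerivAt_id t).sub_const x).pow 2
      simp only [id] at h0
      exact h0.congr_deriv (by norm_num)
    have h2 : HasDerivAt (fun t : ℝ => f' x * t) (f' x) t := by
      simpa using (hasDerivAt_id t).const_mul (f' x)
    have := ((hd t).sub h2).sub (h1.const_mul (L / 2))
    refine this.congr_deriv ?_
    ring
  have hcont : Continuous h := by
    have : Differentiable ℝ h := fun t => (hd' t).differentiableAt
    exact this.continuous
  have key : h y ≤ h x := by
    rcases le_total x y with hxy | hxy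
    · have : AntitoneOn h (Set.Icc x y) := by
        apply antitoneOn_of_deriv_nonpos (convex_Icc x y) hcont.continuousOn
        · intro t ht
          exact ((hd' t).differentiableAt).differentiableWithinAt
        · intro t ht
          rw [(hd' t).deriv]
          rw [interior_Icc] at ht
          have h1 : f' t - f' x ≤ L * |t - x| := le_trans (le_abs_self _) (hlip t x)
          have h2 : |t - x| = t - x := abs_of_nonneg (by linarith [ht.1])
          rw [h2] at h1
          linarith
      exact this (Set.left_mem_Icc.2 hxy) (Set.right_mem_Icc.2 hxy) hxy
    · have : MonotoneOn h (Set.Icc y x) := by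
        apply monotoneOn_of_deriv_nonneg (convex_Icc y x) hcont.continuousOn
        · intro t ht
          exact ((hd' t).differentiableAt).differentiableWithinAt
        · intro t ht
          rw [(hd' t).deriv]
          rw [interior_Icc] at ht
          have h1 : f' x - f' t ≤ L * |x - t| := le_trans (le_abs_self _) (hlip x t)
          have h2 : |x - t| = x - t := abs_of_nonneg (by linarith [ht.2])
          rw [h2] at h1
          linarith
      exact this (Set.left_mem_Icc.2 hxy) (Set.right_mem_Icc.2 hxy) hxy
  simp only [hh] at key
  nlinarith [key]

/-- Tangent line lower bound for convex differentiable function. -/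
lemma aux_tangent {f f' : ℝ → ℝ} (hconv : ConvexOn ℝ Set.univ f)
    (hd : ∀ x, HasDerivAt f (f' x) x) (x y : ℝ) :
    f x + f' x * (y - x) ≤ f y := by
  rcases lt_trichotomy x y with hxy | hxy | hxy
  · have := hconv.le_slope_of_hasDerivAt (Set.mem_univ x) (Set.mem_univ y) hxy (hd x)
    rw [slope_def_field] at this
    have hne : y - x > 0 := by linarith
    rw [le_div_iff₀ hne] at this
    nlinarith [this]
  · simp [hxy]
  · have := hconv.slope_le_of_hasDerivAt (Set.mem_univ y) (Set.mem_univ x) hxy (hd x)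
    rw [slope_def_field] at this
    have hne : x - y > 0 := by linarith
    rw [div_le_iff₀ hne] at this
    nlinarith [this]

/-- KEY: quadratic lower bound on the conjugate. -/
lemma aux_key {f f' : ℝ → ℝ} {gam : ℝ} (hgam : 0 < gam)
    (hd : ∀ x, HasDerivAt f (f' x) x)
    (hlip : ∀ a b, |f' a - f' b| ≤ (1 / gam) * |a - b|)
    {fs : ℝ → ℝ} (hfs : ∀ u, IsLUB (Set.range fun x : ℝ => x * u - f x) (fs u))
    (x m : ℝ) : x * m - f x + gam / 2 * (m - f' x) ^ 2 ≤ fs m := by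
  have h1 : (x + gam * (m - f' x)) * m - f (x + gam * (m - f' x)) ≤ fs m :=
    (hfs m).1 ⟨x + gam * (m - f' x), rfl⟩
  have h2 := aux_smooth hd hlip x (x + gam * (m - f' x))
  have hg : gam ≠ 0 := ne_of_gt hgam
  have e : (1 / gam) / 2 * (x + gam * (m - f' x) - x) ^ 2 = gam / 2 * (m - f' x) ^ 2 := by
    field_simp; ring
  rw [e] at h2
  nlinarith [h1, h2]

/-- Fenchel–Young equality at a derivative point. -/
lemma aux_FY_eq {f f' : ℝ → ℝ} (hconv : ConvexOn ℝ Set.univ f)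
    (hd : ∀ x, HasDerivAt f (f' x) x)
    {fs : ℝ → ℝ} (hfs : ∀ u, IsLUB (Set.range fun x : ℝ => x * u - f x) (fs u))
    (a : ℝ) : fs (f' a) = a * f' a - f a := by
  refine le_antisymm ?_ ((hfs (f' a)).1 ⟨a, rfl⟩)
  apply (hfs (f' a)).2
  rintro _ ⟨x, rfl⟩
  have := aux_tangent hconv hd a x
  dsimp only
  nlinarith [this]

/-- Descent lemma for a function with 1-Lipschitz gradient, along a ray. -/
lemma aux_gdescent {dd : ℕ} {gs : EuclideanSpace ℝ (Fin dd) → ℝ}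
    {gs' : EuclideanSpace ℝ (Fin dd) → EuclideanSpace ℝ (Fin dd)}
    (hgs' : ∀ z, HasGradientAt gs (gs' z) z)
    (hgs'lip : LipschitzWith 1 gs')
    (z h : EuclideanSpace ℝ (Fin dd)) (c : ℝ) :
    gs (z + c • h) ≤ gs z + ⟪gs' z, h⟫_ℝ * c + ‖h‖ ^ 2 / 2 * c ^ 2 := by
  set F : ℝ → ℝ := fun t => gs (z + t • h) with hF
  set F' : ℝ → ℝ := fun t => ⟪gs' (z + t • h), h⟫_ℝ with hF'
  have hdF : ∀ t, HasDerivAt F (F' t) t := by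
    intro t
    have hc : HasDerivAt (fun t : ℝ => z + t • h) h t := by
      simpa using ((hasDerivAt_id t).smul_const h).const_add z
    have hf := ((hgs' (z + t • h)).hasFDerivAt).comp_hasDerivAt t hc
    simpa [hF, hF', InnerProductSpace.toDual_apply_apply, Function.comp_def] using hf
  have hlipF : ∀ a b, |F' a - F' b| ≤ ‖h‖ ^ 2 * |a - b| := by
    intro a b
    have e : F' a - F' b = ⟪gs' (z + a • h) - gs' (z + b • h), h⟫_ℝ := by
      simp [hF', inner_sub_left]
    rw [e]
    calc |⟪gs' (z + a • h) - gs' (z + b • h), h⟫_ℝ|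
        ≤ ‖gs' (z + a • h) - gs' (z + b • h)‖ * ‖h‖ := abs_real_inner_le_norm _ _
      _ ≤ (|a - b| * ‖h‖) * ‖h‖ := by
          apply mul_le_mul_of_nonneg_right _ (norm_nonneg h)
          have := hgs'lip.dist_le_mul (z + a • h) (z + b • h)
          rw [dist_eq_norm, dist_eq_norm] at this
          have e2 : z + a • h - (z + b • h) = (a - b) • h := by
            rw [sub_smul]; abel
          rw [e2, norm_smul] at this
          simpa using this
      _ = ‖h‖ ^ 2 * |a - b| := by ring
  have := aux_smooth hdF hlipF 0 c
  simpa [hF, hF'] using this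

/-- Strong convexity (three-point) of the conjugate, from `aux_key`. -/
lemma aux_strongconv {f f' : ℝ → ℝ} {gam : ℝ} (hgam : 0 < gam)
    (hd : ∀ x, HasDerivAt f (f' x) x)
    (hlip : ∀ a b, |f' a - f' b| ≤ (1 / gam) * |a - b|)
    {fs : ℝ → ℝ} (hfs : ∀ u, IsLUB (Set.range fun x : ℝ => x * u - f x) (fs u))
    (P1 P2 s : ℝ) (hs0 : 0 ≤ s) (hs1 : s ≤ 1) :
    fs ((1 - s) * P1 + s * P2) + gam / 2 * (s * (1 - s)) * (P1 - P2) ^ 2 ≤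
      (1 - s) * fs P1 + s * fs P2 := by
  have hub : fs ((1 - s) * P1 + s * P2) ≤
      (1 - s) * fs P1 + s * fs P2 - gam / 2 * (s * (1 - s)) * (P1 - P2) ^ 2 := by
    apply (hfs ((1 - s) * P1 + s * P2)).2
    rintro _ ⟨x, rfl⟩
    have k1 := aux_key hgam hd hlip hfs x P1
    have k2 := aux_key hgam hd hlip hfs x P2
    dsimp only
    nlinarith [sq_nonneg ((1 - s) * (P1 - f' x) + s * (P2 - f' x)),
      mul_nonneg hs0 (sub_nonneg.2 hs1), hgam.le,
      mul_nonneg (mul_nonneg hgam.le hs0) (sub_nonneg.2 hs1)]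
  linarith
set_option maxHeartbeats 1000000 in
/-- Lemma 1 of the paper: Let `p` be a probability vector coherent with the
dual residue `κ` (`pᵢ > 0` whenever `κᵢ ≠ 0`) and `0 ≤ θ ≤ min_{i∈I} pᵢ`, where
`I = {i : κᵢ ≠ 0}`. For each `i` let `Δᵢ` maximize
`Δ ↦ −φᵢ*(−(αᵢ+Δ)) − (Aᵢᵀw)Δ − (vᵢ/(2λn))Δ²`. Then
`∑ᵢ pᵢ(D(α+Δᵢeᵢ) − D(α)) − θ(P(w) − D(α)) ≥
 −(θ/(2λn²))·∑_{i∈I} (θ(vᵢ+nλγ)/pᵢ − nλγ)κᵢ²`. -/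
theorem stmt8 (n d : ℕ) (hn : 1 ≤ n) (hd : 1 ≤ d)
    (A : Fin n → EuclideanSpace ℝ (Fin d))
    (v : Fin n → ℝ) (hv : ∀ i, v i = ‖A i‖ ^ 2)
    (lam gam : ℝ) (hlam : 0 < lam) (hgam : 0 < gam)
    (g : EuclideanSpace ℝ (Fin d) → ℝ)
    (hg : ∀ w₁ w₂ : EuclideanSpace ℝ (Fin d), ∀ a : ℝ, 0 ≤ a → a ≤ 1 →
      g (a • w₁ + (1 - a) • w₂) ≤ a * g w₁ + (1 - a) * g w₂ - a * (1 - a) / 2 * ‖w₁ - w₂‖ ^ 2)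
    (φ φ' : Fin n → ℝ → ℝ)
    (hφconv : ∀ i, ConvexOn ℝ Set.univ (φ i))
    (hφdiff : ∀ i x, HasDerivAt (φ i) (φ' i x) x)
    (hφlip : ∀ i, ∀ a b : ℝ, |φ' i a - φ' i b| ≤ (1 / gam) * |a - b|)
    (φs : Fin n → ℝ → ℝ)
    (hφs : ∀ i u, IsLUB (Set.range fun x : ℝ => x * u - φ i x) (φs i u))
    (gs : EuclideanSpace ℝ (Fin d) → ℝ)
    (hgs : ∀ z, IsLUB (Set.range fun s : EuclideanSpace ℝ (Fin d) => ⟪s, z⟫_ℝ - g s) (gs z))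
    (gs' : EuclideanSpace ℝ (Fin d) → EuclideanSpace ℝ (Fin d))
    (hgs' : ∀ z, HasGradientAt gs (gs' z) z)
    (hgs'lip : LipschitzWith 1 gs')
    (P : EuclideanSpace ℝ (Fin d) → ℝ)
    (hP : ∀ u, P u = (1 / (n : ℝ)) * ∑ i, φ i ⟪A i, u⟫_ℝ + lam * g u)
    (D : (Fin n → ℝ) → ℝ)
    (hD : ∀ β : Fin n → ℝ,
      D β = -lam * gs ((1 / (lam * n)) • (∑ i, β i • A i)) - (1 / (n : ℝ)) * ∑ i, φs i (-β i))
    (α : Fin n → ℝ)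
    (abar : EuclideanSpace ℝ (Fin d))
    (habar : abar = (1 / (lam * n)) • (∑ i, α i • A i))
    (w : EuclideanSpace ℝ (Fin d)) (hw : w = gs' abar)
    (hattain : g w + gs abar = ⟪w, abar⟫_ℝ)
    (κ : Fin n → ℝ) (hκ : ∀ i, κ i = α i + φ' i ⟪A i, w⟫_ℝ)
    (Δ : Fin n → ℝ)
    (hΔ : ∀ i, ∀ Δ' : ℝ,
      -φs i (-(α i + Δ')) - ⟪A i, w⟫_ℝ * Δ' - v i / (2 * lam * n) * Δ' ^ 2 ≤
      -φs i (-(α i + Δ i)) - ⟪A i, w⟫_ℝ * (Δ i) - v i / (2 * lam * n) * (Δ i) ^ 2)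
    (p : Fin n → ℝ) (hp0 : ∀ i, 0 ≤ p i) (hp1 : ∑ i, p i = 1)
    (hcoh : ∀ i, κ i ≠ 0 → 0 < p i)
    (θ : ℝ) (hθ0 : 0 ≤ θ) (hθmin : ∀ i, κ i ≠ 0 → θ ≤ p i) :
    ∑ i, p i * (D (Function.update α i (α i + Δ i)) - D α) - θ * (P w - D α) ≥
      -(θ / (2 * lam * (n : ℝ) ^ 2)) *
        ∑ i ∈ Finset.univ.filter (fun i => κ i ≠ 0),
          (θ * (v i + n * lam * gam) / p i - n * lam * gam) * κ i ^ 2 := by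
  have hnR : (0 : ℝ) < n := by exact_mod_cast Nat.lt_of_lt_of_le Nat.zero_lt_one hn
  have hnne : (n : ℝ) ≠ 0 := ne_of_gt hnR
  have hlne : lam ≠ 0 := ne_of_gt hlam
  -- Step A: per-coordinate lower bound on the dual increase
  have stepA : ∀ i, D (Function.update α i (α i + Δ i)) - D α ≥
      (1 / (n : ℝ)) * ((-φs i (-(α i + Δ i)) - ⟪A i, w⟫_ℝ * Δ i
        - v i / (2 * lam * n) * (Δ i) ^ 2) + φs i (-(α i))) := by
    intro i
    set c : ℝ := Δ i / (lam * n) with hc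
    have hβsum : ∑ j, (Function.update α i (α i + Δ i)) j • A j
        = (∑ j, α j • A j) + Δ i • A i := by
      have key : ∀ j : Fin n, (Function.update α i (α i + Δ i)) j • A j
          = α j • A j + (if j = i then Δ i • A i else 0) := by
        intro j
        rcases eq_or_ne j i with rfl | hj
        · simp [Function.update_self, add_smul]
        · simp [Function.update_of_ne hj, hj]
      rw [Finset.sum_congr rfl fun j _ => key j, Finset.sum_add_distrib]
      simp
    have harg : (1 / (lam * (n : ℝ))) • ((∑ j, α j • A j) + Δ i • A i)
        = abar + c • A i := by
      rw [habar, smul_add, smul_smul, hc]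
      ring_nf
    have hφsum : ∑ j, φs j (-(Function.update α i (α i + Δ i)) j)
        = (∑ j, φs j (-α j)) + (φs i (-(α i + Δ i)) - φs i (-α i)) := by
      have key : ∀ j : Fin n, φs j (-(Function.update α i (α i + Δ i)) j)
          = φs j (-α j) + (if j = i then φs i (-(α i + Δ i)) - φs i (-α i) else 0) := by
        intro j
        rcases eq_or_ne j i with rfl | hj
        · simp [Function.update_self]
        · simp [Function.update_of_ne hj, hj]
      rw [Finset.sum_congr rfl fun j _ => key j, Finset.sum_add_distrib]
      simp
    have hDdiff : D (Function.update α i (α i + Δ i)) - D α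
        = -lam * (gs (abar + c • A i) - gs abar)
          - (1 / (n : ℝ)) * (φs i (-(α i + Δ i)) - φs i (-α i)) := by
      rw [hD, hD, hβsum, harg, hφsum, ← habar]
      ring
    have hdesc := aux_gdescent hgs' hgs'lip abar (A i) c
    rw [← hw, real_inner_comm, ← hv i] at hdesc
    rw [hDdiff]
    have e1 : -lam * (⟪A i, w⟫_ℝ * c + v i / 2 * c ^ 2)
        = (1 / (n : ℝ)) * (-(⟪A i, w⟫_ℝ * Δ i) - v i / (2 * lam * n) * (Δ i) ^ 2) := by
      rw [hc]; field_simp; ring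
    nlinarith [hdesc, hlam, e1]
  -- Step C: lower bound for the trial step Δ' = -s κ i
  have stepC : ∀ i, ∀ s : ℝ, 0 ≤ s → s ≤ 1 →
      (-φs i (-(α i + (-s * κ i))) - ⟪A i, w⟫_ℝ * (-s * κ i)
        - v i / (2 * lam * n) * (-s * κ i) ^ 2) + φs i (-(α i)) ≥
      s * (φ i ⟪A i, w⟫_ℝ + φs i (-α i) + α i * ⟪A i, w⟫_ℝ)
        + (gam / 2 * (s * (1 - s)) - v i / (2 * lam * n) * s ^ 2) * κ i ^ 2 := by
    intro i s hs0 hs1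
    rw [hκ i]
    have hsc := aux_strongconv hgam (hφdiff i) (hφlip i) (hφs i)
      (-α i) (φ' i ⟪A i, w⟫_ℝ) s hs0 hs1
    have e : (1 - s) * (-α i) + s * (φ' i ⟪A i, w⟫_ℝ)
        = -(α i + (-s * (α i + φ' i ⟪A i, w⟫_ℝ))) := by ring
    rw [e] at hsc
    have hfy := aux_FY_eq (hφconv i) (hφdiff i) (hφs i) ⟪A i, w⟫_ℝ
    rw [hfy] at hsc
    nlinarith [hsc]
  -- Step D: termwise bound including the probability weight
  have term : ∀ i, p i * (D (Function.update α i (α i + Δ i)) - D α) ≥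
      θ / n * (φ i ⟪A i, w⟫_ℝ + φs i (-α i) + α i * ⟪A i, w⟫_ℝ)
        + (if κ i ≠ 0 then
            (gam / 2 * (θ - θ ^ 2 / p i) - v i * θ ^ 2 / (2 * lam * n * p i)) * κ i ^ 2 / n
          else 0) := by
    intro i
    rcases eq_or_ne (κ i) 0 with hki | hki
    · -- κ i = 0 : G i = 0 and the dual increase is nonneg
      simp only [hki, ne_eq, not_true_eq_false, if_false]
      have hα : -α i = φ' i ⟪A i, w⟫_ℝ := by
        have := hκ i; rw [hki] at this; linarith
      have hfy := aux_FY_eq (hφconv i) (hφdiff i) (hφs i) ⟪A i, w⟫_ℝ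
      have hG0 : φ i ⟪A i, w⟫_ℝ + φs i (-α i) + α i * ⟪A i, w⟫_ℝ = 0 := by
        rw [hα, hfy, ← hα]
        ring
      rw [hG0]
      have h0 : -φs i (-(α i + 0)) - ⟪A i, w⟫_ℝ * 0 - v i / (2 * lam * n) * 0 ^ 2 = -φs i (-α i) := by
        norm_num
      have hq := hΔ i 0
      rw [h0] at hq
      have hDd := stepA i
      have : D (Function.update α i (α i + Δ i)) - D α ≥ 0 := by
        have : (0:ℝ) ≤ (1 / (n : ℝ)) * ((-φs i (-(α i + Δ i)) - ⟪A i, w⟫_ℝ * Δ i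
            - v i / (2 * lam * n) * (Δ i) ^ 2) + φs i (-(α i))) := by
          apply mul_nonneg (by positivity)
          linarith
        linarith
      have := mul_nonneg (hp0 i) this
      simpa using this
    · -- κ i ≠ 0
      simp only [hki, ne_eq, not_false_eq_true, if_true]
      have hpi : 0 < p i := hcoh i hki
      set s : ℝ := θ / p i with hs
      have hs0 : 0 ≤ s := div_nonneg hθ0 hpi.le
      have hs1 : s ≤ 1 := (div_le_one hpi).2 (hθmin i hki)
      have hchain : D (Function.update α i (α i + Δ i)) - D α ≥
          (1 / (n : ℝ)) * (s * (φ i ⟪A i, w⟫_ℝ + φs i (-α i) + α i * ⟪A i, w⟫_ℝ)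
            + (gam / 2 * (s * (1 - s)) - v i / (2 * lam * n) * s ^ 2) * κ i ^ 2) := by
        have hA := stepA i
        have hB := hΔ i (-s * κ i)
        have hC := stepC i s hs0 hs1
        have h1n : (0:ℝ) ≤ 1 / (n : ℝ) := by positivity
        have hBC : s * (φ i ⟪A i, w⟫_ℝ + φs i (-α i) + α i * ⟪A i, w⟫_ℝ)
            + (gam / 2 * (s * (1 - s)) - v i / (2 * lam * n) * s ^ 2) * κ i ^ 2
            ≤ (-φs i (-(α i + Δ i)) - ⟪A i, w⟫_ℝ * Δ i
              - v i / (2 * lam * n) * (Δ i) ^ 2) + φs i (-(α i)) := by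
          linarith [hB, hC]
        exact le_trans (mul_le_mul_of_nonneg_left hBC h1n) hA
      have hmul := mul_le_mul_of_nonneg_left hchain (hp0 i)
      have hid : p i * ((1 / (n : ℝ)) * (s * (φ i ⟪A i, w⟫_ℝ + φs i (-α i) + α i * ⟪A i, w⟫_ℝ)
            + (gam / 2 * (s * (1 - s)) - v i / (2 * lam * n) * s ^ 2) * κ i ^ 2))
          = θ / n * (φ i ⟪A i, w⟫_ℝ + φs i (-α i) + α i * ⟪A i, w⟫_ℝ)
            + (gam / 2 * (θ - θ ^ 2 / p i) - v i * θ ^ 2 / (2 * lam * n * p i)) * κ i ^ 2 / n := by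
        rw [hs]; field_simp
      linarith [hmul, hid.symm.le, hid.le]
  -- Step E: duality gap identity
  have hPD : P w - D α = (1 / (n : ℝ)) *
      ∑ i, (φ i ⟪A i, w⟫_ℝ + φs i (-α i) + α i * ⟪A i, w⟫_ℝ) := by
    have hwin : ⟪w, abar⟫_ℝ = (1 / (lam * n)) * ∑ i, α i * ⟪A i, w⟫_ℝ := by
      rw [habar, real_inner_smul_right, inner_sum]
      congr 1
      apply Finset.sum_congr rfl
      intro i _
      rw [real_inner_smul_right, real_inner_comm]
    have h2 : lam * (g w + gs abar) = (1 / (n : ℝ)) * ∑ i, α i * ⟪A i, w⟫_ℝ := by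
      rw [hattain, hwin]
      field_simp
    have h3 : ∑ i, (φ i ⟪A i, w⟫_ℝ + φs i (-α i) + α i * ⟪A i, w⟫_ℝ)
        = ∑ i, φ i ⟪A i, w⟫_ℝ + ∑ i, φs i (-α i) + ∑ i, α i * ⟪A i, w⟫_ℝ := by
      rw [Finset.sum_add_distrib, Finset.sum_add_distrib]
    have h4 : P w - D α = (1 / (n : ℝ)) * ∑ i, φ i ⟪A i, w⟫_ℝ
        + (1 / (n : ℝ)) * ∑ i, φs i (-α i) + lam * (g w + gs abar) := by
      rw [hP, hD, ← habar]; ring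
    rw [h4, h2, h3]
    ring
  -- Final assembly
  have hsum : ∑ i, (θ / n * (φ i ⟪A i, w⟫_ℝ + φs i (-α i) + α i * ⟪A i, w⟫_ℝ)
        + (if κ i ≠ 0 then
            (gam / 2 * (θ - θ ^ 2 / p i) - v i * θ ^ 2 / (2 * lam * n * p i)) * κ i ^ 2 / n
          else 0))
      ≤ ∑ i, p i * (D (Function.update α i (α i + Δ i)) - D α) :=
    Finset.sum_le_sum fun i _ => term i
  rw [Finset.sum_add_distrib, ← Finset.mul_sum, ← Finset.sum_filter] at hsum
  have hRHS : -(θ / (2 * lam * (n : ℝ) ^ 2)) *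
        ∑ i ∈ Finset.univ.filter (fun i => κ i ≠ 0),
          (θ * (v i + n * lam * gam) / p i - n * lam * gam) * κ i ^ 2
      = ∑ i ∈ Finset.univ.filter (fun i => κ i ≠ 0),
          (gam / 2 * (θ - θ ^ 2 / p i) - v i * θ ^ 2 / (2 * lam * n * p i)) * κ i ^ 2 / n := by
    rw [Finset.mul_sum]
    apply Finset.sum_congr rfl
    intro i hi
    have hki : κ i ≠ 0 := (Finset.mem_filter.1 hi).2
    have hpi : p i ≠ 0 := ne_of_gt (hcoh i hki)
    field_simp
    ring
  rw [hPD, hRHS]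
  have : θ * ((1 / (n : ℝ)) * ∑ i, (φ i ⟪A i, w⟫_ℝ + φs i (-α i) + α i * ⟪A i, w⟫_ℝ))
      = θ / n * ∑ i, (φ i ⟪A i, w⟫_ℝ + φs i (-α i) + α i * ⟪A i, w⟫_ℝ) := by ring
  linarith [hsum, this.le, this.symm.le]
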